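/- Let F and G be odd-sunflower-free families of nonempty subsets of two disjoint ground sets, and suppose at least one of F and G is an antichain. Then the direct sum F + G = {F ∪ G : F ∈ F, G ∈ G} is odd-sunflower-free. Moreover, if both F and G are antichains, then F + G is an antichain. -/

import Mathlib

variable {α : Type*}

/-- A family of at least two nonempty finite sets is an *odd-sunflower* if every element of
the union of its members is contained in an odd number of its members. -/
def IsOddSunflower [DecidableEq α] (F : Finset (Finset α)) : Prop :=
  2 ≤ F.card ∧ (∀ S ∈ F, S.Nonempty) ∧
    ∀ x ∈ F.sup id, Odd (F.filter (fun S => x ∈ S)).card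

/-- A family is *odd-sunflower-free* if no subfamily of it (necessarily with at least two
members) is an odd-sunflower. -/
def OddSunflowerFree [DecidableEq α] (F : Finset (Finset α)) : Prop :=
  ∀ H ⊆ F, ¬ IsOddSunflower H

/-- A nonempty family of nonempty finite sets is an *even-sunflower* if every element of
the union of its members is contained in an even number of its members. -/
def IsEvenSunflower [DecidableEq α] (F : Finset (Finset α)) : Prop :=
  F.Nonempty ∧ (∀ S ∈ F, S.Nonempty) ∧
    ∀ x ∈ F.sup id, Even (F.filter (fun S => x ∈ S)).card

/-- A family is *even-sunflower-free* if no nonempty subfamily of it is an even-sunflower. -/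
def EvenSunflowerFree [DecidableEq α] (F : Finset (Finset α)) : Prop :=
  ∀ H ⊆ F, ¬ IsEvenSunflower H

/-- A family of at least three sets is a *sunflower* if every element is contained either
in all of the sets or in at most one of them. -/
def IsSunflower [DecidableEq α] (H : Finset (Finset α)) : Prop :=
  3 ≤ H.card ∧ ∀ x : α, (∀ S ∈ H, x ∈ S) ∨ (H.filter (fun S => x ∈ S)).card ≤ 1

/-- A family of sets is an *antichain* if none of its members is a proper subset of another. -/
def IsAntichainFamily (F : Finset (Finset α)) : Prop :=
  ∀ S ∈ F, ∀ T ∈ F, S ⊆ T → S = T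

/-- An odd-sunflower is *minimal* if no proper subfamily of it is an odd-sunflower. -/
def IsMinimalOddSunflower [DecidableEq α] (F : Finset (Finset α)) : Prop :=
  IsOddSunflower F ∧ ∀ H ⊂ F, ¬ IsOddSunflower H

/-- `Cfam n` is the family of all `(n-1)`-element subsets of `{1, …, n}`. -/
def Cfam (n : ℕ) : Finset (Finset ℕ) := (Finset.Icc 1 n).powersetCard (n - 1)

/-- `CfamPlus n` is `Cfam n` together with the full set `{1, …, n}`. -/
def CfamPlus (n : ℕ) : Finset (Finset ℕ) := insert (Finset.Icc 1 n) (Cfam n)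

/-- A multifamily (multiset) of at least two nonempty finite sets is an *odd-sunflower* if
every element of the union of its members has odd degree (counted with multiplicity). -/
def MultiOddSunflower [DecidableEq α] (H : Multiset (Finset α)) : Prop :=
  2 ≤ Multiset.card H ∧ (∀ S ∈ H, S.Nonempty) ∧
    ∀ x ∈ H.sup, Odd (H.countP (fun S => x ∈ S))

/-- The wreath product of two families. -/
def Wreath {β : Type*} [DecidableEq α] [DecidableEq β]
    (F : Set (Finset α)) (G : Set (Finset β)) : Set (Finset (α × β)) :=
  {S | ∃ F₀ ∈ F, ∃ g : α → Finset β, (∀ i ∈ F₀, g i ∈ G) ∧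
    S = F₀.biUnion (fun i => ({i} : Finset α) ×ˢ g i)}

/-- Odd-sunflower-freeness for set-indexed families. -/
def OddSunflowerFreeS [DecidableEq α] (F : Set (Finset α)) : Prop :=
  ∀ H : Finset (Finset α), ↑H ⊆ F → ¬ IsOddSunflower H

/-- Antichain condition for set-indexed families. -/
def IsAntichainFamilyS (F : Set (Finset α)) : Prop :=
  ∀ S ∈ F, ∀ T ∈ F, S ⊆ T → S = T

lemma odd_sum_iff_aux {ι : Type*} (s : Finset ι) (f : ι → ℕ) :
    Odd (∑ i ∈ s, f i) ↔ Odd ((s.filter fun i => Odd (f i)).card) := by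
  induction s using Finset.cons_induction with
  | empty => simp
  | cons a s ha ih =>
    rw [Finset.sum_cons, Finset.filter_cons]
    by_cases h : Odd (f a)
    · simp only [h, if_pos, Finset.card_cons]
      simp only [Nat.odd_iff] at *
      omega
    · simp only [h, if_neg, not_false_iff]
      simp only [Nat.odd_iff] at *
      omega

lemma aux_free {α : Type*} [DecidableEq α]
    (A B : Finset α) (hAB : Disjoint A B) (F G : Finset (Finset α))
    (hF : ∀ S ∈ F, S.Nonempty ∧ S ⊆ A) (hG : ∀ S ∈ G, S.Nonempty ∧ S ⊆ B)
    (hFfree : OddSunflowerFree F) (hGfree : OddSunflowerFree G)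
    (hFanti : IsAntichainFamily F) :
    OddSunflowerFree ((F ×ˢ G).image fun p => p.1 ∪ p.2) := by
  intro H hH hOS
  obtain ⟨hcard, hne, hodd⟩ := hOS
  -- decomposition
  have hdec : ∀ S ∈ H, S ∩ A ∈ F ∧ S ∩ B ∈ G ∧ S = (S ∩ A) ∪ (S ∩ B) := by
    intro S hS
    have := hH hS
    simp only [Finset.mem_image, Finset.mem_product, Prod.exists] at this
    obtain ⟨F₀, G₀, ⟨hF₀, hG₀⟩, rfl⟩ := this
    have hFA : F₀ ⊆ A := (hF F₀ hF₀).2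
    have hGB : G₀ ⊆ B := (hG G₀ hG₀).2
    have hGA : G₀ ∩ A = ∅ := by
      apply Finset.eq_empty_of_forall_notMem
      intro x hx
      exact (Finset.disjoint_left.mp hAB) (Finset.inter_subset_right hx)
        (hGB (Finset.inter_subset_left hx))
    have hFB : F₀ ∩ B = ∅ := by
      apply Finset.eq_empty_of_forall_notMem
      intro x hx
      exact (Finset.disjoint_left.mp hAB) (hFA (Finset.inter_subset_left hx))
        (Finset.inter_subset_right hx)
    have e1 : (F₀ ∪ G₀) ∩ A = F₀ := by
      rw [Finset.union_inter_distrib_right, hGA, Finset.union_empty,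
        Finset.inter_eq_left.mpr hFA]
    have e2 : (F₀ ∪ G₀) ∩ B = G₀ := by
      rw [Finset.union_inter_distrib_right, hFB, Finset.empty_union,
        Finset.inter_eq_left.mpr hGB]
    rw [e1, e2]
    exact ⟨hF₀, hG₀, rfl⟩
  set P : Finset (Finset α) := H.image (· ∩ A) with hP
  set m : Finset α → ℕ := fun T => (H.filter (fun S => S ∩ A = T)).card with hm
  set Podd : Finset (Finset α) := P.filter (fun T => Odd (m T)) with hPodddef
  have hPsubF : ∀ T ∈ P, T ∈ F := by
    intro T hT
    simp only [hP, Finset.mem_image] at hT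
    obtain ⟨S, hS, rfl⟩ := hT
    exact (hdec S hS).1
  have hPsupH : ∀ T ∈ P, T ⊆ H.sup id := by
    intro T hT
    simp only [hP, Finset.mem_image] at hT
    obtain ⟨S, hS, rfl⟩ := hT
    exact (Finset.inter_subset_left).trans (Finset.le_sup (f := id) hS)
  have hPsubA : ∀ T ∈ P, T ⊆ A := by
    intro T hT
    simp only [hP, Finset.mem_image] at hT
    obtain ⟨S, hS, rfl⟩ := hT
    exact Finset.inter_subset_right
  -- key parity fact
  have key : ∀ x ∈ A, x ∈ H.sup id → Odd ((Podd.filter (fun T => x ∈ T)).card) := by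
    intro x hxA hxH
    have h1 := hodd x hxH
    have e1 : H.filter (fun S => x ∈ S) = H.filter (fun S => x ∈ S ∩ A) := by
      apply Finset.filter_congr
      intro S hS
      simp [Finset.mem_inter, hxA]
    have e2 : (H.filter (fun S => x ∈ S ∩ A)).card
        = ∑ T ∈ P.filter (fun T => x ∈ T), m T := by
      rw [Finset.card_eq_sum_card_fiberwise
        (f := (· ∩ A)) (t := P.filter (fun T => x ∈ T))
        (fun S hS => by
          simp only [Finset.mem_coe, Finset.mem_filter] at hS ⊢
          exact ⟨Finset.mem_image_of_mem _ hS.1, hS.2⟩)]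
      apply Finset.sum_congr rfl
      intro T hT
      simp only [Finset.mem_filter] at hT
      congr 1
      rw [Finset.filter_filter]
      apply Finset.filter_congr
      intro S hS
      constructor
      · rintro ⟨_, h⟩; exact h
      · rintro h; exact ⟨h ▸ hT.2, h⟩
    rw [e1, e2, odd_sum_iff_aux] at h1
    rwa [hPodddef, Finset.filter_comm]
  -- Podd is nonempty
  have hPoddne : Podd.Nonempty := by
    have hHne : H.Nonempty := Finset.card_pos.mp (by omega)
    obtain ⟨S, hS⟩ := hHne
    have hSA := (hdec S hS).1
    obtain ⟨x, hx⟩ := (hF _ hSA).1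
    have hxA : x ∈ A := Finset.inter_subset_right hx
    have hxH : x ∈ H.sup id :=
      (Finset.le_sup (f := id) hS) (Finset.inter_subset_left hx)
    have := key x hxA hxH
    have : (Podd.filter (fun T => x ∈ T)).Nonempty := by
      rw [← Finset.card_pos]
      rcases this with ⟨k, hk⟩
      omega
    obtain ⟨T, hT⟩ := this
    exact ⟨T, (Finset.mem_filter.mp hT).1⟩
  by_cases h2 : 2 ≤ Podd.card
  · apply hFfree Podd (fun T hT => hPsubF T (Finset.filter_subset _ _ hT))
    refine ⟨h2, fun T hT => (hF T (hPsubF T (Finset.filter_subset _ _ hT))).1, ?_⟩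
    intro x hx
    rw [Finset.mem_sup] at hx
    obtain ⟨T, hT, hxT⟩ := hx
    have hT' := Finset.filter_subset _ _ hT
    exact key x (hPsubA T hT' hxT) (hPsupH T hT' hxT)
  · obtain ⟨F₀, hF₀⟩ : ∃ F₀, Podd = {F₀} := by
      apply Finset.card_eq_one.mp
      have := Finset.card_pos.mpr hPoddne
      omega
    have hF₀P : F₀ ∈ P := by
      have : F₀ ∈ Podd := hF₀ ▸ Finset.mem_singleton_self F₀
      exact Finset.filter_subset _ _ this
    have hsub : ∀ T ∈ P, T ⊆ F₀ := by
      intro T hT x hx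
      have hxA : x ∈ A := hPsubA T hT hx
      have hxH : x ∈ H.sup id := hPsupH T hT hx
      have hk := key x hxA hxH
      rw [hF₀] at hk
      by_contra hxF₀
      rw [Finset.filter_singleton, if_neg hxF₀] at hk
      simp at hk
    have hPeq : ∀ T ∈ P, T = F₀ :=
      fun T hT => hFanti T (hPsubF T hT) F₀ (hPsubF F₀ hF₀P) (hsub T hT)
    have hSA : ∀ S ∈ H, S ∩ A = F₀ :=
      fun S hS => hPeq _ (Finset.mem_image_of_mem _ hS)
    -- now the G-parts form an odd-sunflower in G
    set Q : Finset (Finset α) := H.image (· ∩ B) with hQ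
    have hinj : Set.InjOn (· ∩ B) ↑H := by
      intro S₁ h₁ S₂ h₂ he
      have e₁ := (hdec S₁ h₁).2.2
      have e₂ := (hdec S₂ h₂).2.2
      rw [e₁, e₂, hSA S₁ h₁, hSA S₂ h₂]
      exact congrArg (F₀ ∪ ·) he
    apply hGfree Q
    · intro T hT
      simp only [hQ, Finset.mem_image] at hT
      obtain ⟨S, hS, rfl⟩ := hT
      exact (hdec S hS).2.1
    refine ⟨?_, ?_, ?_⟩
    · rw [hQ, Finset.card_image_of_injOn hinj]; exact hcard
    · intro T hT
      simp only [hQ, Finset.mem_image] at hT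
      obtain ⟨S, hS, rfl⟩ := hT
      exact (hG _ (hdec S hS).2.1).1
    · intro x hx
      rw [Finset.mem_sup] at hx
      obtain ⟨T, hT, hxT⟩ := hx
      simp only [hQ, Finset.mem_image] at hT
      obtain ⟨S₀, hS₀, rfl⟩ := hT
      have hxB : x ∈ B := Finset.inter_subset_right hxT
      have hxH : x ∈ H.sup id :=
        (Finset.le_sup (f := id) hS₀) (Finset.inter_subset_left hxT)
      have h1 := hodd x hxH
      have e1 : H.filter (fun S => x ∈ S) = H.filter (fun S => x ∈ S ∩ B) := by
        apply Finset.filter_congr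
        intro S hS
        simp [Finset.mem_inter, hxB]
      have e2 : Q.filter (fun T => x ∈ T) = (H.filter (fun S => x ∈ S ∩ B)).image (· ∩ B) := by
        rw [hQ, Finset.filter_image]
      rw [e2, Finset.card_image_of_injOn
        (hinj.mono (by intro S hS; simp only [Finset.coe_filter, Set.mem_setOf_eq] at hS; exact hS.1))]
      rwa [e1] at h1

/-- Lemma 4: if `F` and `G` are odd-sunflower-free families of nonempty subsets of two
disjoint ground sets, and at least one of them is an antichain, then the direct sum
`F + G = {F ∪ G : F ∈ F, G ∈ G}` is odd-sunflower-free.  Moreover, if both are antichains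
then so is `F + G`. -/
theorem directSum_oddSunflowerFree {α : Type*} [DecidableEq α]
    (A B : Finset α) (hAB : Disjoint A B) (F G : Finset (Finset α))
    (hF : ∀ S ∈ F, S.Nonempty ∧ S ⊆ A) (hG : ∀ S ∈ G, S.Nonempty ∧ S ⊆ B)
    (hFfree : OddSunflowerFree F) (hGfree : OddSunflowerFree G) :
    ((IsAntichainFamily F ∨ IsAntichainFamily G) →
      OddSunflowerFree ((F ×ˢ G).image fun p => p.1 ∪ p.2)) ∧
    (IsAntichainFamily F → IsAntichainFamily G →
      IsAntichainFamily ((F ×ˢ G).image fun p => p.1 ∪ p.2)) := by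
  constructor
  · rintro (hFa | hGa)
    · exact aux_free A B hAB F G hF hG hFfree hGfree hFa
    · have e : ((F ×ˢ G).image fun p => p.1 ∪ p.2)
          = ((G ×ˢ F).image fun p => p.1 ∪ p.2) := by
        ext S
        simp only [Finset.mem_image, Finset.mem_product, Prod.exists]
        constructor
        · rintro ⟨a, b, ⟨h1, h2⟩, rfl⟩
          exact ⟨b, a, ⟨h2, h1⟩, Finset.union_comm _ _⟩
        · rintro ⟨a, b, ⟨h1, h2⟩, rfl⟩
          exact ⟨b, a, ⟨h2, h1⟩, Finset.union_comm _ _⟩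
      rw [e]
      exact aux_free B A hAB.symm G F hG hF hGfree hFfree hGa
  · intro hFa hGa S hS T hT hST
    simp only [Finset.mem_image, Finset.mem_product, Prod.exists] at hS hT
    obtain ⟨F₁, G₁, ⟨hF₁, hG₁⟩, rfl⟩ := hS
    obtain ⟨F₂, G₂, ⟨hF₂, hG₂⟩, rfl⟩ := hT
    have hFsub : F₁ ⊆ F₂ := by
      intro x hx
      have hxA : x ∈ A := (hF F₁ hF₁).2 hx
      have := hST (Finset.mem_union_left _ hx)
      rcases Finset.mem_union.mp this with h | h
      · exact h
      · exact absurd hxA (Finset.disjoint_right.mp hAB ((hG G₂ hG₂).2 h))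
    have hGsub : G₁ ⊆ G₂ := by
      intro x hx
      have hxB : x ∈ B := (hG G₁ hG₁).2 hx
      have := hST (Finset.mem_union_right _ hx)
      rcases Finset.mem_union.mp this with h | h
      · exact absurd hxB (Finset.disjoint_left.mp hAB ((hF F₂ hF₂).2 h))
      · exact h
    rw [hFa F₁ hF₁ F₂ hF₂ hFsub, hGa G₁ hG₁ G₂ hG₂ hGsub]
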